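/- Let α be a composition (finitely supported sequence of nonnegative integers) with |α| = n, let β be a finitely supported sequence of nonnegative integers with |β| = n − 1, and let σ_β ∈ S_{n−1} be a permutation with cycle type β. Fix i and a subset X ⊆ {1,…,n−1}. If there exists an α−ε_i tabloid t fixed by σ_β with t_i = X, then α_i − 1 = Σ_{j : supp(σ_j) ⊆ X} β_j, where σ_β = ∏_j σ_j is the decomposition into disjoint cycles with |supp(σ_j)| = β_j. -/

import Mathlib

open Finsupp
open scoped Classical

/-- The row index of `k` in the standard tabloid of shape `α`: the least `i` such that
`k < α 0 + ⋯ + α i`. -/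
noncomputable def rowIdx (α : ℕ →₀ ℤ) (k : ℕ) : ℕ := sInf {i | (k : ℤ) < ∑ j ∈ Finset.range (i + 1), α j}

/-- The Young subgroup of `S_n` associated to `α`: the stabilizer of the standard tabloid
whose rows are the consecutive blocks of `{0, …, n-1}` of sizes `α 0, α 1, …`. -/
def youngSubgroup (n : ℕ) (α : ℕ →₀ ℤ) : Subgroup (Equiv.Perm (Fin n)) where
  carrier := {σ | ∀ k : Fin n, rowIdx α (σ k) = rowIdx α k}
  one_mem' := fun _ => rfl
  mul_mem' := by
    intro a b ha hb k
    simpa [Equiv.Perm.mul_apply] using (ha (b k)).trans (hb k)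
  inv_mem' := by
    intro a ha k
    have := ha (a⁻¹ k)
    have hak : a (a⁻¹ k) = k := by simp
    rw [hak] at this
    exact this.symm

/-- The value at `g` of the permutation character of `G` acting on the cosets of `H`:
the number of fixed cosets.  This is the value of the character induced from the
trivial character of `H`. -/
noncomputable def permCharValue {n : ℕ} (H : Subgroup (Equiv.Perm (Fin n)))
    (g : Equiv.Perm (Fin n)) : ℤ :=
  Nat.card {x : Equiv.Perm (Fin n) ⧸ H // g • x = x}

/-- `ξ^α`, as a function on `S_n`: the permutation character induced from the trivial
character of the Young subgroup `S_α` when `α` is nonnegative with `|α| = n`, and `0`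
otherwise. -/
noncomputable def xi (n : ℕ) (α : ℕ →₀ ℤ) (g : Equiv.Perm (Fin n)) : ℤ :=
  if (∀ i, 0 ≤ α i) ∧ (α.sum fun _ v => v) = (n : ℤ) then permCharValue (youngSubgroup n α) g
  else 0

/-- An `α`-tabloid: a sequence of pairwise disjoint subsets of `{0,…,n-1}` with
`|t i| = α i` for every `i`. -/
def IsTabloid (n : ℕ) (α : ℕ →₀ ℤ) (t : ℕ → Finset (Fin n)) : Prop :=
  (∀ i j, i ≠ j → Disjoint (t i) (t j)) ∧ ∀ i, ((t i).card : ℤ) = α i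

/-- The multiset of (nonzero) parts of a finitely supported sequence. -/
def partsOf (β : ℕ →₀ ℕ) : Multiset ℕ := β.support.val.map β

/-- `σ` has cycle type `β` (with `1`s in `β` recording fixed points). -/
def HasCycleType {n : ℕ} (σ : Equiv.Perm (Fin n)) (β : ℕ →₀ ℕ) : Prop :=
  (β.sum fun _ v => v) = n ∧ σ.cycleType = Multiset.filter (fun k => 2 ≤ k) (partsOf β)

/-- A nonnegative sequence regarded as an integer sequence. -/
noncomputable def natToZ (β : ℕ →₀ ℕ) : ℕ →₀ ℤ := Finsupp.mapRange Int.ofNat rfl β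

/-- The virtual character `χ^α = ∑_{σ ∈ S_l} sgn σ · ξ^{α + σ - id_l}` (0-indexed,
the sequence `α + σ - id_l` has `i`-th entry `α i + σ i - i`). -/
noncomputable def chi (n l : ℕ) (α : ℕ →₀ ℤ) (g : Equiv.Perm (Fin n)) : ℤ :=
  ∑ σ : Equiv.Perm (Fin l),
    (Equiv.Perm.sign σ : ℤ) *
      xi n (α + ∑ i : Fin l, Finsupp.single (i : ℕ) (((σ i : ℕ) : ℤ) - (i : ℕ))) g

/-- `ζ^α`, the irreducible character of `S_n` corresponding to the partition `α` of `n`,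
given by the determinantal formula `ζ^α = χ^α` (with `l = n ≥ l(α)`). -/
noncomputable def zeta (n : ℕ) (α : ℕ →₀ ℕ) (g : Equiv.Perm (Fin n)) : ℤ :=
  chi n n (natToZ α) g

/-- `α` is a partition of `n`: weakly decreasing with `|α| = n`. -/
def IsPartitionOf (α : ℕ →₀ ℕ) (n : ℕ) : Prop :=
  (∀ i, α (i + 1) ≤ α i) ∧ (α.sum fun _ v => v) = n

/-- If some `(α - ε i)`-tabloid `t` with `t i = X` is fixed by a permutation `σ` of `S_{n-1}`
of cycle type `β`, then `α i - 1` equals the sum of `β j` over those cycles whose support is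
contained in `X`. -/
theorem stmt2 (N : ℕ) (α : ℕ →₀ ℤ) (hαpos : ∀ i, 0 ≤ α i)
    (hαsum : (α.sum fun _ v => v) = ((N + 1 : ℕ) : ℤ))
    (β : ℕ →₀ ℕ) (hβsum : (β.sum fun _ v => v) = N)
    (f : ℕ → Equiv.Perm (Fin N)) (S : ℕ → Finset (Fin N))
    (hcomm : (β.support : Set ℕ).Pairwise fun a b => Commute (f a) (f b))
    (σ : Equiv.Perm (Fin N)) (hσ : σ = β.support.noncommProd f hcomm)
    (hcard : ∀ j, (S j).card = β j)
    (hcyc : ∀ j, (f j).IsCycleOn (S j : Set (Fin N)))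
    (hfix : ∀ j x, x ∉ S j → f j x = x)
    (hdisj : ∀ j k, j ≠ k → Disjoint (S j) (S k))
    (i : ℕ) (X : Finset (Fin N))
    (hne : ∃ t : ℕ → Finset (Fin N),
      IsTabloid N (α - Finsupp.single i 1) t ∧ (∀ k, (t k).image σ = t k) ∧ t i = X) :
    α i - 1 = ∑ j ∈ β.support.filter (fun j => S j ⊆ X), (β j : ℤ) := by
  obtain ⟨t, htab, hinv, hXt⟩ := hne
  -- `σ` acts as `f j` on `S j`
  have hstep : ∀ j ∈ β.support, ∀ x ∈ S j, σ x = f j x := by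
    intro j hj x hx
    rw [hσ, ← Finset.mul_noncommProd_erase β.support hj f hcomm]
    have hrest : ∀ y ∈ S j,
        ((β.support.erase j).noncommProd f fun a ha b hb hab =>
          hcomm (Finset.mem_of_mem_erase ha) (Finset.mem_of_mem_erase hb) hab) y = y := by
      refine Finset.noncommProd_induction _ _ _ (fun g : Equiv.Perm (Fin N) => ∀ y ∈ S j, g y = y) ?_ ?_ ?_
      · intro a b ha hb y hy
        rw [Equiv.Perm.mul_apply, hb y hy, ha y hy]
      · intro y _; rfl
      · intro k hk y hy
        refine hfix k y fun hyk => ?_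
        exact absurd hyk (Finset.disjoint_left.1 (hdisj j k fun h => (Finset.mem_erase.1 hk).1 h.symm) hy)
    rw [Equiv.Perm.mul_apply, hrest x hx]
  -- `X` is closed under `σ`
  have hXinv : ∀ x ∈ X, σ x ∈ X := by
    intro x hx
    have := hinv i
    rw [hXt] at this
    rw [← this]
    exact Finset.mem_image_of_mem σ hx
  -- `f j` maps `S j` to itself
  have hmem : ∀ j, ∀ x ∈ S j, f j x ∈ S j := by
    intro j x hx
    have : f j x ∈ (S j : Set (Fin N)) := (hcyc j).apply_mem_iff.2 hx
    exact_mod_cast this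
  -- if a point of `S j` lies in `X`, then all of `S j` does
  have hSsub : ∀ j ∈ β.support, ∀ x ∈ S j, x ∈ X → S j ⊆ X := by
    intro j hj x hxS hxX
    have hpow : ∀ n : ℕ, ((f j) ^ n) x ∈ X ∧ ((f j) ^ n) x ∈ S j := by
      intro n
      induction n with
      | zero => exact ⟨hxX, hxS⟩
      | succ n ih =>
        have h1 : ((f j) ^ (n + 1)) x = f j (((f j) ^ n) x) := by
          rw [pow_succ', Equiv.Perm.mul_apply]
        constructor
        · rw [h1, ← hstep j hj _ ih.2]
          exact hXinv _ ih.1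
        · rw [h1]; exact hmem j _ ih.2
    intro y hy
    have hsc : (f j).SameCycle x y := (hcyc j).2 (by exact_mod_cast hxS) (by exact_mod_cast hy)
    obtain ⟨m, _, hm⟩ := hsc.exists_pow_eq'
    rw [← hm]
    exact (hpow m).1
  -- the `S j` cover `Fin N`
  have hcover : ∀ x : Fin N, ∃ j ∈ β.support, x ∈ S j := by
    have hbu : β.support.biUnion S = Finset.univ := by
      refine Finset.eq_univ_of_card _ ?_
      rw [Finset.card_biUnion fun j _ k _ hjk => hdisj j k hjk]
      simp only [hcard]
      simpa [Finsupp.sum] using hβsum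
    intro x
    have : x ∈ β.support.biUnion S := by rw [hbu]; exact Finset.mem_univ x
    exact Finset.mem_biUnion.1 this
  -- `X` is the union of the `S j` it contains
  have hXeq : X = (β.support.filter fun j => S j ⊆ X).biUnion S := by
    ext x
    constructor
    · intro hx
      obtain ⟨j, hj, hxj⟩ := hcover x
      exact Finset.mem_biUnion.2 ⟨j, Finset.mem_filter.2 ⟨hj, hSsub j hj x hxj hx⟩, hxj⟩
    · intro hx
      obtain ⟨j, hj, hxj⟩ := Finset.mem_biUnion.1 hx
      exact (Finset.mem_filter.1 hj).2 hxj
  have hXcard : X.card = ∑ j ∈ β.support.filter (fun j => S j ⊆ X), β j := by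
    conv_lhs => rw [hXeq]
    rw [Finset.card_biUnion fun j _ k _ hjk => hdisj j k hjk]
    exact Finset.sum_congr rfl fun j _ => hcard j
  have hti : ((t i).card : ℤ) = α i - 1 := by
    have := htab.2 i
    simpa [Finsupp.sub_apply] using this
  rw [← hti, hXt, hXcard]
  push_cast
  rfl
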